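/- Let α be a finite type, let g : α → α → Bool be regular with respect to a subgroup S of Equiv.Perm α × Equiv.Perm α, let m be the cardinality of S and fix an enumeration e : Fin m ≃ S. Fix n and a, b, a', b' : Fin n → α. If there exists an index i with g (a i) (b i) ≠ g (a' i) (b' i), then the sets { Unfold(a,b)(I) : I ∈ (Fin n → Fin m) } and { Unfold(a',b')(I) : I ∈ (Fin n → Fin m) } are disjoint. -/
import Mathlib

/-- A bipartite Boolean function `g` is regular with respect to a subgroup `S` of
`Equiv.Perm α × Equiv.Perm α` if the coordinatewise action of `S` preserves `g` and `S`
acts simply transitively on each fiber of `g`. -/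
def IsRegularGadget {α : Type*} (g : α → α → Bool)
    (S : Subgroup (Equiv.Perm α × Equiv.Perm α)) : Prop :=
  (∀ s ∈ S, ∀ x y : α, g (s.1 x) (s.2 y) = g x y) ∧
  (∀ x₁ y₁ x₂ y₂ : α, g x₁ y₁ = g x₂ y₂ →
    ∃! s : S, ((s : Equiv.Perm α × Equiv.Perm α).1 x₁,
               (s : Equiv.Perm α × Equiv.Perm α).2 y₁) = (x₂, y₂))

/-- The `Unfold` map: given an enumeration `e : Fin m ≃ S` of the symmetry group and an
input `(a, b)` to `g^n`, it sends an index tuple `I : Fin n → Fin m` to the input to `g^n`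
obtained by applying the `I i`-th symmetry in the `i`-th coordinate. -/
def Unfold {α : Type*} {S : Subgroup (Equiv.Perm α × Equiv.Perm α)} {m n : ℕ}
    (e : Fin m ≃ S) (a b : Fin n → α) (I : Fin n → Fin m) :
    (Fin n → α) × (Fin n → α) :=
  (fun i => (e (I i) : Equiv.Perm α × Equiv.Perm α).1 (a i),
   fun i => (e (I i) : Equiv.Perm α × Equiv.Perm α).2 (b i))

/-- Claim (iii): if `(a, b)` and `(a', b')` encode different strings, then the sets of
values of `Unfold (a, b)` and `Unfold (a', b')` are disjoint. -/
theorem unfold_disjoint {α : Type*} [Fintype α]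
    (g : α → α → Bool) (S : Subgroup (Equiv.Perm α × Equiv.Perm α))
    (hreg : IsRegularGadget g S) {m n : ℕ} (e : Fin m ≃ S) (a b a' b' : Fin n → α)
    (h : ∃ i, g (a i) (b i) ≠ g (a' i) (b' i)) :
    Disjoint (Set.range (Unfold e a b)) (Set.range (Unfold e a' b')) := by
  obtain ⟨i, hi⟩ := h
  rw [Set.disjoint_left]
  rintro x ⟨I, rfl⟩ ⟨J, hJ⟩
  apply hi
  have h1 : (fun i => (e (I i) : Equiv.Perm α × Equiv.Perm α).1 (a i))
      = fun i => (e (J i) : Equiv.Perm α × Equiv.Perm α).1 (a' i) :=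
    congrArg Prod.fst hJ.symm
  have h2 : (fun i => (e (I i) : Equiv.Perm α × Equiv.Perm α).2 (b i))
      = fun i => (e (J i) : Equiv.Perm α × Equiv.Perm α).2 (b' i) :=
    congrArg Prod.snd hJ.symm
  have h1i := congrFun h1 i
  have h2i := congrFun h2 i
  calc g (a i) (b i)
      = g ((e (I i) : Equiv.Perm α × Equiv.Perm α).1 (a i))
          ((e (I i) : Equiv.Perm α × Equiv.Perm α).2 (b i)) :=
        (hreg.1 _ (e (I i)).2 _ _).symm
    _ = g ((e (J i) : Equiv.Perm α × Equiv.Perm α).1 (a' i))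
          ((e (J i) : Equiv.Perm α × Equiv.Perm α).2 (b' i)) := by rw [h1i, h2i]
    _ = g (a' i) (b' i) := hreg.1 _ (e (J i)).2 _ _
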